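/- arXiv:2603.16704 — 8 statements merged into one kernel-verified Lean document; each statement's English description precedes it below -/
import Mathlib

section
/- Let X be a set and f : X → X a function with no fixed points. Then there exists a partition of X into three sets A₁, A₂, A₃ such that f(Aᵢ) ∩ Aᵢ = ∅ for each i = 1, 2, 3. -/
private lemma katetov_finite_color {X : Type*} (f : X → X) (hf : ∀ x, f x ≠ x)
    (V : Finset X) : ∃ c : X → Fin 3, ∀ x ∈ V, f x ∈ V → c (f x) ≠ c x := by
  classical
  induction V using Finset.strongInduction with
  | _ V IH =>
    rcases V.eq_empty_or_nonempty with rfl | hne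
    · exact ⟨fun _ => 0, by simp⟩
    set E := V.filter (fun x => f x ∈ V) with hE
    have hEsub : E ⊆ V := Finset.filter_subset _ _
    have hsum : ∑ v ∈ V, ((E.filter (fun x => f x = v)).card
        + (if v ∈ E then 1 else 0)) = 2 * E.card := by
      rw [Finset.sum_add_distrib]
      have h1 : ∑ v ∈ V, (E.filter (fun x => f x = v)).card = E.card := by
        refine (Finset.card_eq_sum_card_fiberwise ?_).symm
        intro x hx
        exact (Finset.mem_filter.mp hx).2
      have h2 : (∑ v ∈ V, (if v ∈ E then 1 else 0)) = E.card := by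
        rw [← Finset.card_filter]
        congr 1
        ext x
        simp only [Finset.mem_filter]
        exact ⟨fun h => h.2, fun h => ⟨hEsub h, h⟩⟩
      rw [h1, h2]; ring
    have hEcard : E.card ≤ V.card := Finset.card_le_card hEsub
    have hdeg : ∃ v ∈ V, (E.filter (fun x => f x = v)).card
        + (if v ∈ E then 1 else 0) ≤ 2 := by
      by_contra h
      push_neg at h
      have h3 : 3 * V.card ≤ ∑ v ∈ V, ((E.filter (fun x => f x = v)).card
          + (if v ∈ E then 1 else 0)) := by
        calc 3 * V.card = ∑ _v ∈ V, 3 := by rw [Finset.sum_const]; ring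
        _ ≤ _ := Finset.sum_le_sum (fun v hv => h v hv)
      have hV1 : 1 ≤ V.card := Finset.card_pos.mpr hne
      omega
    obtain ⟨v, hvV, hvdeg⟩ := hdeg
    obtain ⟨c, hc⟩ := IH (V.erase v) (Finset.erase_ssubset hvV)
    set N : Finset (Fin 3) := ((E.filter (fun x => f x = v)).image c)
        ∪ (if v ∈ E then {c (f v)} else ∅) with hN
    have hNcard : N.card ≤ 2 := by
      calc N.card ≤ ((E.filter (fun x => f x = v)).image c).card
          + (if v ∈ E then ({c (f v)} : Finset (Fin 3)) else ∅).card :=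
          Finset.card_union_le _ _
      _ ≤ (E.filter (fun x => f x = v)).card + (if v ∈ E then 1 else 0) := by
          gcongr
          · exact Finset.card_image_le
          · split <;> simp
      _ ≤ 2 := hvdeg
    have hk : ∃ k : Fin 3, k ∉ N := by
      have : (Nᶜ : Finset (Fin 3)).Nonempty := by
        rw [← Finset.card_pos, Finset.card_compl]
        have : Fintype.card (Fin 3) = 3 := by simp
        omega
      obtain ⟨k, hk⟩ := this
      exact ⟨k, by simpa using hk⟩
    obtain ⟨k, hk⟩ := hk
    refine ⟨Function.update c v k, ?_⟩
    intro x hx hfx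
    by_cases hxv : x = v
    · subst hxv
      have hvE : x ∈ E := Finset.mem_filter.mpr ⟨hx, hfx⟩
      rw [Function.update_self, Function.update_of_ne (hf x)]
      intro hcontra
      apply hk
      rw [hN]
      apply Finset.mem_union_right
      simp [hvE, hcontra]
    · by_cases hfxv : f x = v
      · have hxE : x ∈ E := Finset.mem_filter.mpr ⟨hx, hfx⟩
        rw [hfxv, Function.update_self, Function.update_of_ne hxv]
        intro hcontra
        apply hk
        rw [hN]
        apply Finset.mem_union_left
        exact Finset.mem_image.mpr ⟨x, Finset.mem_filter.mpr ⟨hxE, hfxv⟩, hcontra.symm⟩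
      · rw [Function.update_of_ne hfxv, Function.update_of_ne hxv]
        exact hc x (Finset.mem_erase.mpr ⟨hxv, hx⟩) (Finset.mem_erase.mpr ⟨hfxv, hfx⟩)

/-- Katětov's lemma: any fixed-point-free function admits a 3-part partition
each part of which is moved off itself. -/
theorem katetov_lemma {X : Type*} (f : X → X) (hf : ∀ x, f x ≠ x) :
    ∃ A : Fin 3 → Set X, (∀ x, ∃! i, x ∈ A i) ∧
      ∀ i, f '' A i ∩ A i = ∅ := by
  classical
  have key : ∃ c : X → Fin 3, ∀ x, c (f x) ≠ c x := by
    set Z : X → Set (X → Fin 3) := fun x => {c | c (f x) ≠ c x} with hZ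
    have hZc : ∀ x, IsClosed (Z x) := by
      intro x
      have : Z x = (fun c : X → Fin 3 => (c (f x), c x)) ⁻¹'
          {p : Fin 3 × Fin 3 | p.1 ≠ p.2} := rfl
      rw [this]
      exact (isClosed_discrete _).preimage
        (Continuous.prodMk (continuous_apply _) (continuous_apply _))
    by_contra h
    push_neg at h
    have hempty : (Set.univ : Set (X → Fin 3)) ∩ ⋂ x, Z x = ∅ := by
      ext c
      simp only [Set.mem_inter_iff, Set.mem_iInter, Set.mem_empty_iff_false,
        iff_false, Set.mem_univ, true_and, not_forall]
      obtain ⟨x, hx⟩ := h c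
      exact ⟨x, by simp [hZ, hx]⟩
    obtain ⟨t, ht⟩ := IsCompact.elim_finite_subfamily_closed isCompact_univ Z hZc hempty
    obtain ⟨c, hc⟩ := katetov_finite_color f hf (t ∪ t.image f)
    have hcmem : c ∈ (Set.univ : Set (X → Fin 3)) ∩ ⋂ x ∈ t, Z x := by
      refine ⟨Set.mem_univ _, ?_⟩
      simp only [Set.mem_iInter]
      intro x hx
      exact hc x (Finset.mem_union_left _ hx)
        (Finset.mem_union_right _ (Finset.mem_image_of_mem f hx))
    rw [ht] at hcmem
    exact hcmem
  obtain ⟨c, hc⟩ := key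
  refine ⟨fun i => c ⁻¹' {i}, fun x => ⟨c x, rfl, fun j hj => hj.symm⟩, fun i => ?_⟩
  ext y
  simp only [Set.mem_inter_iff, Set.mem_image, Set.mem_preimage, Set.mem_singleton_iff,
    Set.mem_empty_iff_false, iff_false]
  rintro ⟨⟨x, hx, rfl⟩, hy⟩
  exact hc x (hy.trans hx.symm)
end

section
/- Let X be a set and f₁, …, fₙ : X → X functions, each with no fixed points. Then there is a partition of X into 3ⁿ sets A₁, …, A_{3ⁿ} such that fₖ(Aᵢ) ∩ Aᵢ = ∅ for every k = 1, …, n and every i = 1, …, 3ⁿ. -/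
open Function
namespace KatetovAux
attribute [local instance] Classical.propDecidable
variable {X : Type*} (f : X → X)

def Rel (x y : X) : Prop := ∃ n m : ℕ, f^[n] x = f^[m] y
theorem rel_refl (x : X) : Rel f x x := ⟨0, 0, rfl⟩
theorem rel_symm {x y : X} (h : Rel f x y) : Rel f y x :=
  let ⟨n, m, h⟩ := h; ⟨m, n, h.symm⟩
theorem rel_trans {x y z : X} : Rel f x y → Rel f y z → Rel f x z := by
  rintro ⟨n, m, h1⟩ ⟨n', m', h2⟩
  refine ⟨n' + n, m + m', ?_⟩
  rw [iterate_add_apply, h1, ← iterate_add_apply, add_comm n' m, iterate_add_apply, h2,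
    ← iterate_add_apply]
theorem rel_apply_left (x : X) : Rel f (f x) x := ⟨0, 1, by simp⟩
def relSetoid : Setoid X := ⟨Rel f, ⟨rel_refl f, rel_symm f, rel_trans f⟩⟩
noncomputable def rep (x : X) : X := Quotient.out (Quotient.mk (relSetoid f) x)
theorem rep_rel (x : X) : Rel f (rep f x) x := Quotient.mk_out (s := relSetoid f) x
theorem rep_apply (x : X) : rep f (f x) = rep f x := by
  unfold rep; congr 1
  exact Quotient.sound (s := relSetoid f) (rel_apply_left f x)
def Reaches (x : X) : Prop := ∃ n : ℕ, f^[n] x ∈ periodicPts f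
theorem per_iterate {x : X} (h : x ∈ periodicPts f) (n : ℕ) : f^[n] x ∈ periodicPts f := by
  obtain ⟨k, hk, hp⟩ := h; exact ⟨k, hk, hp.apply_iterate n⟩
theorem reaches_of_rel {x y : X} (h : Rel f x y) (hx : Reaches f x) : Reaches f y := by
  obtain ⟨n, m, hnm⟩ := h
  obtain ⟨a, ha⟩ := hx
  refine ⟨a + m, ?_⟩
  have h2 : f^[a + m] y = f^[a] (f^[n] x) := by rw [hnm, ← iterate_add_apply]
  rw [h2, ← iterate_add_apply]
  have h3 := per_iterate f ha (a + n - a)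
  rw [← iterate_add_apply] at h3
  have hle : a + n - a + a = a + n := by omega
  rwa [hle] at h3

-- NEW PART

/-- Canonical periodic basepoint of a class (junk if the class has no periodic points). -/
noncomputable def basept (x : X) : X :=
  if h : Reaches f (rep f x) then f^[Nat.find h] (rep f x) else rep f x

theorem basept_apply (x : X) : basept f (f x) = basept f x := by
  unfold basept
  rw [rep_apply]

theorem basept_mem {x : X} (h : Reaches f x) : basept f x ∈ periodicPts f := by
  have hr : Reaches f (rep f x) := reaches_of_rel f (rel_symm f (rep_rel f x)) h
  rw [basept, dif_pos hr]
  exact Nat.find_spec hr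

theorem basept_rel (x : X) : Rel f (basept f x) x := by
  unfold basept
  split
  · exact rel_trans f ⟨0, Nat.find _, rfl⟩ (rep_rel f x)
  · exact rep_rel f x

/-- Every periodic point of a class with periodic basepoint lies on the basepoint's orbit. -/
theorem exists_iterate_basept {x : X} (hx : x ∈ periodicPts f) :
    ∃ i, f^[i] (basept f x) = x := by
  obtain ⟨a, b, hab⟩ := rel_symm f (basept_rel f x)
  -- hab : f^[a] x = f^[b] (basept f x)
  obtain ⟨P, hP, hPx⟩ := hx
  refine ⟨P * a - a + b, ?_⟩
  have h1 : f^[P * a] x = x := (hPx.mul_const a).eq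
  have h2 : P * a - a + a = P * a := by have := Nat.le_mul_of_pos_left a hP; omega
  calc f^[P * a - a + b] (basept f x) = f^[P * a - a] (f^[b] (basept f x)) := by
        rw [iterate_add_apply]
      _ = f^[P * a - a] (f^[a] x) := by rw [hab]
      _ = f^[P * a] x := by rw [← iterate_add_apply, h2]
      _ = x := h1

noncomputable def cidx (x : X) : ℕ :=
  if h : ∃ i, f^[i] (basept f x) = x then Nat.find h else 0

theorem cidx_spec {x : X} (hx : x ∈ periodicPts f) : f^[cidx f x] (basept f x) = x := by
  unfold cidx
  split
  · next h => exact Nat.find_spec h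
  · exact absurd (exists_iterate_basept f hx) ‹_›

theorem cidx_lt {x : X} (hx : x ∈ periodicPts f) (hb : Reaches f x) :
    cidx f x < minimalPeriod f (basept f x) := by
  set p := basept f x with hp
  have hper : p ∈ periodicPts f := basept_mem f hb
  have hpos : 0 < minimalPeriod f p := minimalPeriod_pos_of_mem_periodicPts hper
  unfold cidx
  split
  · next hex =>
    by_contra hlt
    push_neg at hlt
    set N := Nat.find hex with hN
    have hNs : f^[N] p = x := Nat.find_spec hex
    have hsmall : f^[N - minimalPeriod f p] p = x := by
      have h5 : f^[N - minimalPeriod f p] (f^[minimalPeriod f p] p) = f^[N] p := by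
        rw [← iterate_add_apply]; congr 1; omega
      rw [isPeriodicPt_minimalPeriod f p] at h5
      rw [h5]; exact hNs
    exact Nat.find_min hex (by omega) hsmall
  · exact hpos

theorem cidx_apply {x : X} (hf : ∀ y, f y ≠ y) (hx : x ∈ periodicPts f) (hb : Reaches f x) :
    cidx f (f x) = (cidx f x + 1) % minimalPeriod f (basept f x) := by
  set p := basept f x with hp
  have hper : p ∈ periodicPts f := basept_mem f hb
  have hpos : 0 < minimalPeriod f p := minimalPeriod_pos_of_mem_periodicPts hper
  have hfx : f x ∈ periodicPts f := by
    obtain ⟨P, hP, hPx⟩ := hx; exact ⟨P, hP, hPx.apply⟩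
  have hbfx : Reaches f (f x) := ⟨0, hfx⟩
  have hbeq : basept f (f x) = p := basept_apply f x
  have h1 : f^[cidx f (f x)] p = f x := by
    have := cidx_spec f hfx; rwa [hbeq] at this
  have h2 : f^[(cidx f x + 1) % minimalPeriod f p] p = f x := by
    rw [iterate_mod_minimalPeriod_eq, iterate_succ_apply', cidx_spec f hx]
  have hlt1 : cidx f (f x) < minimalPeriod f p := by
    have := cidx_lt f hfx hbfx; rwa [hbeq] at this
  have hlt2 : (cidx f x + 1) % minimalPeriod f p < minimalPeriod f p := Nat.mod_lt _ hpos
  exact (iterate_eq_iterate_iff_of_lt_minimalPeriod hlt1 hlt2).mp (h1.trans h2.symm)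


/-- Coloring pattern along a cycle of length `l`. -/
def ccol (i l : ℕ) : ZMod 3 := if i + 1 = l ∧ Odd l then 2 else ((i % 2 : ℕ) : ZMod 3)

theorem ccol_ne {i l : ℕ} (hl : 2 ≤ l) (hi : i < l) : ccol ((i + 1) % l) l ≠ ccol i l := by
  unfold ccol
  split_ifs with h1 h2 h2
  · exfalso
    obtain ⟨ha, -⟩ := h1
    obtain ⟨hb, -⟩ := h2
    rw [hb, Nat.mod_self] at ha
    omega
  · rcases Nat.mod_two_eq_zero_or_one i with h | h <;> rw [h] <;> decide
  · rcases Nat.mod_two_eq_zero_or_one ((i + 1) % l) with h | h <;> rw [h] <;> decide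
  · have key : (i + 1) % l % 2 ≠ i % 2 := by
      rcases eq_or_lt_of_le (Nat.succ_le_of_lt hi) with he | hlt
      · have e0 : (i + 1) % l = 0 := by
          rw [show i + 1 = l from he, Nat.mod_self]
        have hodd : ¬Odd l := fun ho => h2 ⟨he, ho⟩
        have : Even l := Nat.not_odd_iff_even.mp hodd
        have : Even (i + 1) := by rwa [show i + 1 = l from he]
        have hoi : ¬Even i := by rwa [Nat.even_add_one] at this
        have : i % 2 = 1 := Nat.not_even_iff.mp hoi
        omega
      · rw [Nat.mod_eq_of_lt hlt]
        omega
    rcases Nat.mod_two_eq_zero_or_one ((i + 1) % l) with ha | ha <;>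
      rcases Nat.mod_two_eq_zero_or_one i with hb | hb <;>
        rw [ha, hb] at key ⊢ <;>
          first | exact absurd rfl key | decide
noncomputable def cyccol (x : X) : ZMod 3 := ccol (cidx f x) (minimalPeriod f (basept f x))

theorem cyccol_apply {x : X} (hf : ∀ y, f y ≠ y) (hx : x ∈ periodicPts f) :
    cyccol f (f x) ≠ cyccol f x := by
  have hb : Reaches f x := ⟨0, hx⟩
  have hper : basept f x ∈ periodicPts f := basept_mem f hb
  have hl2 : 2 ≤ minimalPeriod f (basept f x) := by
    have hpos : 0 < minimalPeriod f (basept f x) := minimalPeriod_pos_of_mem_periodicPts hper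
    have hne1 : minimalPeriod f (basept f x) ≠ 1 :=
      fun h => hf _ (minimalPeriod_eq_one_iff_isFixedPt.mp h)
    omega
  unfold cyccol
  rw [basept_apply, cidx_apply f hf hx hb]
  exact ccol_ne hl2 (cidx_lt f hx hb)

/-- Height in a cycle-free class, relative to the representative. -/
noncomputable def height (x : X) : ℤ :=
  if h : ∃ nm : ℕ × ℕ, f^[nm.1] x = f^[nm.2] (rep f x) then
    ((Classical.choose h).2 : ℤ) - (Classical.choose h).1
  else 0

theorem iterate_rep_injective {x : X} (hx : ¬Reaches f x) {a b : ℕ}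
    (h : f^[a] (rep f x) = f^[b] (rep f x)) : a = b := by
  have hr : ¬Reaches f (rep f x) := fun hr => hx (reaches_of_rel f (rep_rel f x) hr)
  by_contra hne
  wlog hab : a < b generalizing a b
  · exact this h.symm (Ne.symm hne) (by omega)
  apply hr
  refine ⟨a, b - a, by omega, ?_⟩
  show f^[b - a] (f^[a] (rep f x)) = f^[a] (rep f x)
  rw [← iterate_add_apply]
  have : b - a + a = b := by omega
  rw [this, h]

theorem height_eq {x : X} (hx : ¬Reaches f x) {n m : ℕ}
    (hnm : f^[n] x = f^[m] (rep f x)) : height f x = (m : ℤ) - n := by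
  have hex : ∃ nm : ℕ × ℕ, f^[nm.1] x = f^[nm.2] (rep f x) := ⟨(n, m), hnm⟩
  unfold height
  rw [dif_pos hex]
  have hc := Classical.choose_spec hex
  set nm := Classical.choose hex with hnmdef
  have h1 : f^[nm.1 + n] x = f^[nm.1 + m] (rep f x) := by
    rw [iterate_add_apply, hnm, ← iterate_add_apply]
  have h2 : f^[n + nm.1] x = f^[n + nm.2] (rep f x) := by
    rw [iterate_add_apply, hc, ← iterate_add_apply]
  have h3 : nm.1 + m = n + nm.2 :=
    iterate_rep_injective f hx (by rw [← h1, add_comm nm.1 n, h2])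
  push_cast
  omega


theorem height_apply {x : X} (hx : ¬Reaches f x) : height f (f x) = height f x + 1 := by
  obtain ⟨n, m, hnm⟩ := rel_symm f (rep_rel f x)
  have hfx : ¬Reaches f (f x) := fun h => hx (reaches_of_rel f (rel_apply_left f x) h)
  have h1 : height f x = (m : ℤ) - n := height_eq f hx hnm
  have h2 : f^[n] (f x) = f^[m + 1] (rep f (f x)) := by
    rw [rep_apply, ← iterate_succ_apply, iterate_succ_apply', iterate_succ_apply', hnm]
  have h3 : height f (f x) = ((m + 1 : ℕ) : ℤ) - n := height_eq f hfx h2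
  rw [h1, h3]
  push_cast
  ring

noncomputable def col (x : X) : ZMod 3 :=
  if hr : Reaches f x then
    if Nat.find hr = 0 then cyccol f x
    else cyccol f (f^[Nat.find hr] x) + (if Nat.find hr % 2 = 1 then 1 else 2)
  else if Even (height f x) then 0 else 1

theorem col_apply (hf : ∀ y, f y ≠ y) (x : X) : col f (f x) ≠ col f x := by
  by_cases hr : Reaches f x
  · have hr' : Reaches f (f x) := reaches_of_rel f (rel_symm f (rel_apply_left f x)) hr
    unfold col
    rw [dif_pos hr, dif_pos hr']
    set d := Nat.find hr with hd
    rcases Nat.eq_zero_or_pos d with h0 | hpos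
    · have hxper : x ∈ periodicPts f := by
        have hs := Nat.find_spec hr
        rwa [← hd, h0, Function.iterate_zero_apply] at hs
      have hfxper : f x ∈ periodicPts f := by
        obtain ⟨P, hP, hPx⟩ := hxper
        exact ⟨P, hP, hPx.apply⟩
      have h0' : Nat.find hr' = 0 :=
        (Nat.find_eq_zero hr').mpr (by simpa using hfxper)
      rw [h0', if_pos rfl, h0, if_pos rfl]
      exact cyccol_apply f hf hxper
    · have hd' : Nat.find hr' = d - 1 := by
        refine (Nat.find_eq_iff hr').mpr ?_
        constructor
        · have heq : f^[d - 1] (f x) = f^[d] x := by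
            rw [← Function.iterate_succ_apply]
            congr 1
            omega
          rw [heq, hd]
          exact Nat.find_spec hr
        · intro j hj hper
          refine Nat.find_min hr (show j + 1 < d by omega) ?_
          rwa [Function.iterate_succ_apply]
      rw [hd']
      rcases eq_or_lt_of_le (show 1 ≤ d from hpos) with h1 | h2
      · rw [if_pos (by omega), if_neg (by omega), ← h1, Function.iterate_one,
          show (1 : ℕ) % 2 = 1 from rfl, if_pos rfl]
        exact fun h => absurd (left_eq_add.mp h) (by decide)
      · rw [if_neg (by omega : ¬(d - 1 = 0)), if_neg (by omega : ¬(d = 0))]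
        have heq : f^[d - 1] (f x) = f^[d] x := by
          rw [← Function.iterate_succ_apply]
          congr 1
          omega
        rw [heq]
        rcases Nat.mod_two_eq_zero_or_one d with hp | hp
        · rw [if_pos (show (d - 1) % 2 = 1 by omega), if_neg (show ¬(d % 2 = 1) by omega)]
          exact fun h => absurd (add_left_cancel h) (by decide)
        · rw [if_neg (show ¬((d - 1) % 2 = 1) by omega), if_pos hp]
          exact fun h => absurd (add_left_cancel h) (by decide)
  · have hfx : ¬Reaches f (f x) := fun h => hr (reaches_of_rel f (rel_apply_left f x) h)
    unfold col
    rw [dif_neg hr, dif_neg hfx, height_apply f hr]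
    rcases Int.even_or_odd (height f x) with he | ho
    · rw [if_pos he, if_neg (fun H => (Int.even_add_one.mp H) he)]
      decide
    · have hne : ¬Even (height f x) := Int.not_even_iff_odd.mpr ho
      rw [if_neg hne, if_pos (Int.even_add_one.mpr hne)]
      decide

theorem katetov (hf : ∀ y, f y ≠ y) : ∃ c : X → Fin 3, ∀ x, c (f x) ≠ c x := by
  refine ⟨fun x => ⟨(col f x).val, (col f x).val_lt⟩, fun x h => ?_⟩
  exact col_apply f hf x (ZMod.val_injective 3 (congrArg Fin.val h))

end KatetovAux

/-- Iterated Katětov lemma for finitely many fixed-point-free functions. -/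
theorem katetov_lemma_iterated {X : Type*} (n : ℕ) (f : Fin n → X → X)
    (hf : ∀ k x, f k x ≠ x) :
    ∃ A : Fin (3 ^ n) → Set X, (∀ x, ∃! i, x ∈ A i) ∧
      ∀ k i, f k '' A i ∩ A i = ∅ := by
  choose c hc using fun k => KatetovAux.katetov (f k) (fun x => hf k x)
  set C : X → Fin (3 ^ n) := fun x => finFunctionFinEquiv (fun k => c k x) with hC
  refine ⟨fun i => C ⁻¹' {i}, fun x => ⟨C x, rfl, fun j hj => (Set.mem_singleton_iff.mp hj).symm⟩,
    fun k i => ?_⟩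
  ext y
  simp only [Set.mem_inter_iff, Set.mem_image, Set.mem_preimage, Set.mem_singleton_iff,
    Set.mem_empty_iff_false, iff_false, not_and]
  rintro ⟨x, hx, rfl⟩ hy
  have hCC : (fun j => c j (f k x)) = fun j => c j x :=
    finFunctionFinEquiv.injective (hy.trans hx.symm)
  exact hc k x (congrFun hCC k)
end

section
/- Let Γ be a group and let s ∈ Γ with s ≠ e. Then there is a partition Γ = A₁ ⊔ A₂ ⊔ A₃ such that sAᵢ ∩ Aᵢ = ∅ for each i = 1, 2, 3. -/
lemma color_int : ∃ g : ℤ → Fin 3, ∀ v, g (v + 1) ≠ g v := by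
  refine ⟨fun v => if v % 2 = 0 then 0 else 1, fun v => ?_⟩
  have h2 : (v + 1) % 2 = 0 ↔ ¬ (v % 2 = 0) := by omega
  by_cases h : v % 2 = 0 <;> simp [h, h2]

lemma color_zmod (m : ℕ) (h2 : 2 ≤ m) :
    ∃ g : ZMod m → Fin 3, ∀ v, g (v + 1) ≠ g v := by
  haveI : NeZero m := ⟨by omega⟩
  haveI : Fact (1 < m) := ⟨by omega⟩
  refine ⟨fun v => if v.val = m - 1 then 2 else if v.val % 2 = 0 then 0 else 1,
    fun v => ?_⟩
  have hlt : v.val < m := ZMod.val_lt v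
  have hv1 : (v + 1).val = (v.val + 1) % m := by
    rw [ZMod.val_add, ZMod.val_one]
  have hv2 : (v + 1).val = if v.val = m - 1 then 0 else v.val + 1 := by
    by_cases h : v.val = m - 1
    · rw [if_pos h, hv1, h]
      have : m - 1 + 1 = m := by omega
      rw [this, Nat.mod_self]
    · rw [if_neg h, hv1, Nat.mod_eq_of_lt (by omega)]
  simp only [hv2]
  by_cases h : v.val = m - 1
  · rw [if_pos h, if_pos h, if_neg (by omega), if_pos (by omega)]; decide
  · rw [if_neg h, if_neg h]
    by_cases h3 : v.val + 1 = m - 1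
    · rw [if_pos h3]
      split_ifs <;> decide
    · rw [if_neg h3]
      by_cases h4 : v.val % 2 = 0
      · rw [if_pos h4, if_neg (by omega)]; decide
      · rw [if_neg h4, if_pos (by omega)]; decide

/-- Katětov partition for a left translation by a non-identity group element. -/
theorem katetov_translation {Γ : Type*} [Group Γ] (s : Γ) (hs : s ≠ 1) :
    ∃ A : Fin 3 → Set Γ, (∀ x, ∃! i, x ∈ A i) ∧
      ∀ i, (fun x => s * x) '' A i ∩ A i = ∅ := by
  classical
  -- reduce to finding f : Γ → Fin 3 with f (s * x) ≠ f x
  suffices h : ∃ f : Γ → Fin 3, ∀ x, f (s * x) ≠ f x by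
    obtain ⟨f, hf⟩ := h
    refine ⟨fun i => f ⁻¹' {i}, fun x => ⟨f x, rfl, fun i hi => hi.symm⟩, fun i => ?_⟩
    ext y
    simp only [Set.mem_inter_iff, Set.mem_image, Set.mem_preimage, Set.mem_singleton_iff,
      Set.mem_empty_iff_false, iff_false, not_and]
    rintro ⟨x, hx, rfl⟩ hy
    exact hf x (hy.trans hx.symm)
  -- setoid of orbits of left multiplication by powers of s
  let r : Setoid Γ :=
    ⟨fun x y => ∃ k : ℤ, s ^ k * y = x, fun x => ⟨0, by simp⟩,
      fun {x y} ⟨k, hk⟩ => ⟨-k, by rw [← hk]; group⟩,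
      fun {x y z} ⟨k, hk⟩ ⟨l, hl⟩ => ⟨k + l, by rw [← hk, ← hl]; group⟩⟩
  let ρ : Γ → Γ := fun x => (Quotient.mk r x).out
  have hρ : ∀ x, ∃ k : ℤ, s ^ k * ρ x = x := by
    intro x
    exact Setoid.symm (Quotient.mk_out (s := r) x)
  let n : Γ → ℤ := fun x => (hρ x).choose
  have hn : ∀ x, s ^ (n x) * ρ x = x := fun x => (hρ x).choose_spec
  have hρs : ∀ x, ρ (s * x) = ρ x := by
    intro x
    have : (Quotient.mk r (s * x)) = Quotient.mk r x := Quotient.sound ⟨1, by simp⟩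
    simp only [ρ, this]
  have key : ∀ x, s ^ (n (s * x)) = s ^ (n x + 1) := by
    intro x
    have h1 : s ^ (n (s * x)) * ρ x = s ^ (n x + 1) * ρ x := by
      calc s ^ (n (s * x)) * ρ x = s ^ (n (s * x)) * ρ (s * x) := by rw [hρs]
        _ = s * x := hn (s * x)
        _ = s * (s ^ (n x) * ρ x) := by rw [hn]
        _ = s ^ (n x + 1) * ρ x := by rw [add_comm, zpow_add, zpow_one, mul_assoc]
    exact mul_right_cancel h1
  have keymod : ∀ x, n (s * x) ≡ n x + 1 [ZMOD (orderOf s)] := by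
    intro x
    exact zpow_eq_zpow_iff_modEq.mp (key x)
  rcases Nat.eq_zero_or_pos (orderOf s) with h0 | hposm
  · -- infinite order
    obtain ⟨g, hg⟩ := color_int
    refine ⟨fun x => g (n x), fun x => ?_⟩
    have hx : n (s * x) = n x + 1 := by
      have := keymod x
      rw [h0] at this
      simpa [Int.ModEq] using this
    show g (n (s * x)) ≠ g (n x)
    rw [hx]
    exact hg _
  · -- finite order
    have hm : 2 ≤ orderOf s := by
      have : orderOf s ≠ 1 := fun h => hs (orderOf_eq_one_iff.mp h)
      omega
    obtain ⟨g, hg⟩ := color_zmod _ hm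
    refine ⟨fun x => g ((n x : ZMod (orderOf s))), fun x => ?_⟩
    have hx : ((n (s * x) : ZMod (orderOf s))) = (n x : ZMod (orderOf s)) + 1 := by
      have := (ZMod.intCast_eq_intCast_iff _ _ _).mpr (keymod x)
      push_cast at this
      exact this
    show g ((n (s * x) : ZMod (orderOf s))) ≠ g ((n x : ZMod (orderOf s)))
    rw [hx]
    exact hg _
end

section
/- Let Γ be a group and F ⊆ Γ a finite set with e ∉ F. Then there is a finite partition Γ = ⨆_{i ∈ I} Aᵢ such that sAᵢ ∩ Aᵢ = ∅ for every s ∈ F and every i ∈ I; moreover one can take |I| ≤ 3^{|F|}. -/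
section KatetovAux

open Classical

/-- Color a `ZMod n` element into three colors so that consecutive elements
get different colors (when `n ≠ 1`). -/
private noncomputable def zcol (n : ℕ) (k : ZMod n) : Fin 3 :=
  if k.val + 1 = n then 2 else if k.val % 2 = 0 then 0 else 1

private lemma zcol_succ_ne {n : ℕ} (hn : n ≠ 1) (k : ZMod n) :
    zcol n (k + 1) ≠ zcol n k := by
  unfold zcol
  rcases n with _ | m
  · -- n = 0, ZMod 0 = ℤ, val = natAbs
    have h2 : Even (k + 1).val ↔ ¬ Even k.val := by
      have hz : ∀ j : ℤ, Even (j + 1).natAbs ↔ ¬ Even j.natAbs := fun j => by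
        rw [Int.natAbs_even, Int.natAbs_even, Int.even_add_one]
      exact hz k
    rw [Nat.even_iff, Nat.even_iff] at h2
    simp only [Nat.succ_ne_zero, Nat.add_one_ne_zero, if_false]
    split_ifs with h h' h' <;> first | omega | decide
  · have hm : 1 ≤ m := by omega
    have hval : (k + 1).val = (k.val + 1) % (m + 1) := by
      have : (1 : ZMod (m + 1)).val = 1 := by
        haveI : Fact (1 < m + 1) := ⟨by omega⟩
        exact ZMod.val_one (m + 1)
      rw [ZMod.val_add, this]
    have hk : k.val < m + 1 := ZMod.val_lt k
    rw [hval]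
    rcases Nat.lt_or_ge (k.val + 1) (m + 1) with h | h
    · rw [Nat.mod_eq_of_lt h]
      split_ifs with h1 h2 h2 h3 h3 <;> first | omega | decide
    · have hx : k.val + 1 = m + 1 := by omega
      have : (k.val + 1) % (m + 1) = 0 := by rw [hx]; exact Nat.mod_self _
      rw [this]
      split_ifs with h1 h2 h2 h3 h3 <;> first | omega | decide

variable {Γ : Type*} [Group Γ]

/-- Canonical representative of the right coset `(zpowers s) * x`. -/
private noncomputable def krep (s x : Γ) : Γ :=
  (Quotient.mk (QuotientGroup.rightRel (Subgroup.zpowers s)) x).out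

private lemma krep_spec (s x : Γ) : x * (krep s x)⁻¹ ∈ Subgroup.zpowers s := by
  have h := Quotient.mk_out (s := QuotientGroup.rightRel (Subgroup.zpowers s)) x
  exact (QuotientGroup.rightRel_apply).mp h

private lemma krep_mul (s x : Γ) : krep s (s * x) = krep s x := by
  unfold krep
  congr 1
  apply Quotient.sound
  exact (QuotientGroup.rightRel_apply).mpr
    (by simpa using Subgroup.mem_zpowers s)

/-- An exponent `k` with `x = s ^ k * krep s x`. -/
private noncomputable def kexp (s x : Γ) : ℤ :=
  (Subgroup.mem_zpowers_iff.mp (krep_spec s x)).choose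

private lemma kexp_spec (s x : Γ) : s ^ (kexp s x) = x * (krep s x)⁻¹ :=
  (Subgroup.mem_zpowers_iff.mp (krep_spec s x)).choose_spec

private lemma zpow_eq_cast_eq (s : Γ) {a b : ℤ} (h : s ^ a = s ^ b) :
    (a : ZMod (orderOf s)) = (b : ZMod (orderOf s)) := by
  have h1 : s ^ (a - b) = 1 := by
    rw [zpow_sub, h, mul_inv_cancel]
  have h2 : ((orderOf s : ℤ)) ∣ (a - b) := orderOf_dvd_iff_zpow_eq_one.mpr h1
  rw [ZMod.intCast_eq_intCast_iff]
  exact (Int.modEq_iff_dvd.mpr (by simpa using h2.neg_right)).symm.symm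

private lemma kexp_mul (s x : Γ) :
    ((kexp s (s * x) : ZMod (orderOf s))) = ((kexp s x + 1 : ℤ) : ZMod (orderOf s)) := by
  apply zpow_eq_cast_eq
  have h1 : s ^ (kexp s (s * x)) = (s * x) * (krep s x)⁻¹ := by
    rw [kexp_spec s (s * x), krep_mul]
  have h2 : s ^ (kexp s x + 1 : ℤ) = (s * x) * (krep s x)⁻¹ := by
    rw [add_comm, zpow_add, zpow_one, kexp_spec s x, mul_assoc]
  rw [h1, h2]

/-- The three-coloring associated to translation by `s`. -/
private noncomputable def scol (s x : Γ) : Fin 3 :=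
  zcol (orderOf s) ((kexp s x : ZMod (orderOf s)))

private lemma scol_mul_ne {s : Γ} (hs : s ≠ 1) (x : Γ) : scol s (s * x) ≠ scol s x := by
  unfold scol
  rw [kexp_mul, Int.cast_add, Int.cast_one]
  exact zcol_succ_ne (fun h => hs (orderOf_eq_one_iff.mp h)) _

end KatetovAux

/-- Finite Katětov partition for a finite set of non-identity translations,
with at most 3^|F| parts. -/
theorem katetov_translation_finset {Γ : Type*} [Group Γ] (F : Finset Γ)
    (hF : (1 : Γ) ∉ F) :
    ∃ (m : ℕ) (A : Fin m → Set Γ), m ≤ 3 ^ F.card ∧ (∀ x, ∃! i, x ∈ A i) ∧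
      ∀ s ∈ F, ∀ i, (fun x => s * x) '' A i ∩ A i = ∅ := by
  classical
  set n := 3 ^ F.card with hn
  have hcard : Fintype.card (↥F → Fin 3) = n := by
    rw [Fintype.card_fun, Fintype.card_fin, Fintype.card_coe]
  let e : (↥F → Fin 3) ≃ Fin n := Fintype.equivFinOfCardEq hcard
  let col : Γ → (↥F → Fin 3) := fun x s => scol (s : Γ) x
  refine ⟨n, fun i => {x | e (col x) = i}, le_refl _, ?_, ?_⟩
  · intro x
    exact ⟨e (col x), rfl, fun j hj => hj.symm⟩
  · intro s hs i
    ext y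
    simp only [Set.mem_inter_iff, Set.mem_image, Set.mem_setOf_eq, Set.mem_empty_iff_false,
      iff_false, not_and]
    rintro ⟨x, hx, rfl⟩ hy
    have hcol : col (s * x) = col x := e.injective (hy.trans hx.symm)
    have := congrFun hcol ⟨s, hs⟩
    have hs1 : s ≠ 1 := fun h => hF (h ▸ hs)
    exact scol_mul_ne hs1 x this
end

section
/- Let Γ be a discrete group acting on its Stone–Čech compactification βΓ by the continuous extension of left translation. Then this action is free: for every s ∈ Γ with s ≠ e and every x ∈ βΓ, s·x ≠ x. -/
private def chi (m : ℕ) (k : ZMod m) : Fin 3 :=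
  if k.val + 1 = m ∧ m % 2 = 1 then 2 else ⟨k.val % 2, by omega⟩

private theorem chi_succ_ne {m : ℕ} (hm : m ≠ 1) (k : ZMod m) :
    chi m (k + 1) ≠ chi m k := by
  unfold chi
  rcases Nat.eq_zero_or_pos m with hm0 | hmpos
  · subst hm0
    have h1 : ZMod.val (k + 1) = Int.natAbs ((show ℤ from k) + 1) := rfl
    have h2 : ZMod.val k = Int.natAbs (show ℤ from k) := rfl
    rw [if_neg (by omega), if_neg (by omega)]
    apply Fin.ne_of_val_ne
    show ZMod.val (k + 1) % 2 ≠ ZMod.val k % 2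
    rw [h1, h2]
    omega
  · have : NeZero m := ⟨by omega⟩
    have h2 : 1 < m := by omega
    have : Fact (1 < m) := ⟨h2⟩
    have hk : k.val < m := ZMod.val_lt k
    have hadd : (k + 1).val = (k.val + 1) % m := by
      rw [ZMod.val_add, ZMod.val_one]
    rcases Nat.lt_or_ge (k.val + 1) m with h | h
    · rw [Nat.mod_eq_of_lt h] at hadd
      split_ifs with ha hb hb <;> simp_all [Fin.ext_iff] <;> omega
    · have : k.val + 1 = m := by omega
      rw [this, Nat.mod_self] at hadd
      split_ifs with ha hb hb <;> simp_all [Fin.ext_iff] <;> omega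

theorem exists_coloring {Γ : Type*} [Group Γ] (s : Γ) (hs : s ≠ 1) :
    ∃ c : Γ → Fin 3, ∀ t, c (s * t) ≠ c t := by
  classical
  set m := orderOf s with hm
  have hm1 : m ≠ 1 := fun h => hs (orderOf_eq_one_iff.mp h)
  let st : Setoid Γ :=
    ⟨fun t u => ∃ n : ℤ, u = s ^ n * t, by
      constructor
      · exact fun t => ⟨0, by simp⟩
      · rintro t u ⟨n, rfl⟩; exact ⟨-n, by group⟩
      · rintro t u v ⟨n, rfl⟩ ⟨p, rfl⟩; exact ⟨p + n, by group⟩⟩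
  let rep : Γ → Γ := fun t => (Quotient.mk st t).out
  have hrep : ∀ t, ∃ n : ℤ, t = s ^ n * rep t := fun t =>
    Quotient.exact (Quotient.out_eq (Quotient.mk st t))
  let ν : Γ → ZMod m := fun t => ((hrep t).choose : ZMod m)
  have hν : ∀ t, ν (s * t) = ν t + 1 := by
    intro t
    have hrepeq : rep (s * t) = rep t := by
      have : (Quotient.mk st (s * t)) = Quotient.mk st t :=
        Quotient.sound (Setoid.symm ⟨1, by rw [zpow_one]⟩)
      simp only [rep, this]
    have h1 := (hrep t).choose_spec
    set n₁ := (hrep t).choose with hn₁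
    set n₂ := (hrep (s * t)).choose with hn₂
    have h2 : s * t = s ^ n₂ * rep t :=
      (hrep (s * t)).choose_spec.trans (congrArg (fun z => s ^ n₂ * z) hrepeq)
    have h2' : s * t = s ^ (n₁ + 1) * rep t := by
      calc s * t = s * (s ^ n₁ * rep t) := by rw [← h1]
      _ = s ^ (n₁ + 1) * rep t := by rw [← mul_assoc, ← zpow_one_add, add_comm]
    have hpow : s ^ n₂ = s ^ (n₁ + 1) := mul_right_cancel (h2.symm.trans h2')
    have hdvd : (m : ℤ) ∣ n₂ - (n₁ + 1) := by
      rw [hm, orderOf_dvd_iff_zpow_eq_one, zpow_sub, hpow, mul_inv_cancel]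
    have hz : ((n₂ - (n₁ + 1) : ℤ) : ZMod m) = 0 :=
      (ZMod.intCast_zmod_eq_zero_iff_dvd _ _).mpr hdvd
    have he : ((n₂ : ℤ) : ZMod m) = ((n₁ + 1 : ℤ) : ZMod m) := by
      rwa [Int.cast_sub, sub_eq_zero] at hz
    show ((n₂ : ℤ) : ZMod m) = ((n₁ : ℤ) : ZMod m) + 1
    rw [he]; push_cast; ring
  exact ⟨fun t => chi m (ν t), fun t => by
    show chi m (ν (s * t)) ≠ chi m (ν t)
    rw [hν t]; exact chi_succ_ne hm1 (ν t)⟩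

/-- The Ellis theorem: the extension of left translation by a non-identity
element of a discrete group to the Stone–Čech compactification has no
fixed points. -/
theorem ellis_theorem {Γ : Type*} [Group Γ] [TopologicalSpace Γ]
    [DiscreteTopology Γ] (s : Γ) (hs : s ≠ 1) (x : StoneCech Γ) :
    stoneCechExtend
      (g := fun t : Γ => stoneCechUnit (s * t)) continuous_of_discreteTopology
      x ≠ x := by
  obtain ⟨c, hc⟩ := exists_coloring s hs
  have hcont : Continuous c := continuous_of_discreteTopology
  set f : StoneCech Γ → StoneCech Γ :=
    stoneCechExtend (g := fun t : Γ => stoneCechUnit (s * t))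
      continuous_of_discreteTopology with hf
  set C : StoneCech Γ → Fin 3 := stoneCechExtend hcont with hC
  have hCunit : ∀ t : Γ, C (stoneCechUnit t) = c t := fun t =>
    congrFun (stoneCechExtend_extends hcont) t
  have hfunit : ∀ t : Γ, f (stoneCechUnit t) = stoneCechUnit (s * t) := fun t =>
    congrFun (stoneCechExtend_extends _) t
  have key : ∀ y : StoneCech Γ, C (f y) ≠ C y := by
    have hg : Continuous (fun y : StoneCech Γ => (C (f y), C y)) :=
      ((continuous_stoneCechExtend hcont).comp
        (continuous_stoneCechExtend _)).prodMk (continuous_stoneCechExtend hcont)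
    have hclosed : IsClosed {p : Fin 3 × Fin 3 | p.1 ≠ p.2} := isClosed_discrete _
    have hsub : Set.univ ⊆ (fun y : StoneCech Γ => (C (f y), C y)) ⁻¹'
        {p : Fin 3 × Fin 3 | p.1 ≠ p.2} := by
      have hdense := denseRange_stoneCechUnit (α := Γ)
      have hcl : IsClosed ((fun y : StoneCech Γ => (C (f y), C y)) ⁻¹'
          {p : Fin 3 × Fin 3 | p.1 ≠ p.2}) := hclosed.preimage hg
      have hrange : Set.range (stoneCechUnit : Γ → StoneCech Γ) ⊆
          (fun y : StoneCech Γ => (C (f y), C y)) ⁻¹'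
          {p : Fin 3 × Fin 3 | p.1 ≠ p.2} := by
        rintro _ ⟨t, rfl⟩
        show C (f (stoneCechUnit t)) ≠ C (stoneCechUnit t)
        rw [hfunit, hCunit, hCunit]
        exact hc t
      calc Set.univ ⊆ closure (Set.range (stoneCechUnit : Γ → StoneCech Γ)) := by
            rw [hdense.closure_range]
      _ ⊆ _ := hcl.closure_subset_iff.mpr hrange
    exact fun y => hsub (Set.mem_univ y)
  exact fun h => key x (by rw [h])
end

section
/- Let Γ be a discrete group. The image of the map Φ : ℓ∞(Γ) ⊗_{alg} ℓ∞(Γ) → ℓ∞(Γ, ℓ∞(Γ)), Φ(f ⊗ g)(s,t) = f(st)g(t), spans a subspace whose closure in the topology of uniform convergence on sets K × Γ (K ⊆ Γ finite) contains 1_{\{v\}} ⊗ 1 for every v ∈ Γ. -/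
/-- A 3-coloring of `ZMod n` such that adjacent elements get different colors
(for `n ≠ 1`). -/
private def eeφ (n : ℕ) (x : ZMod n) : Fin 3 :=
  if x.val = n - 1 then 2 else if x.val % 2 = 0 then 0 else 1

private theorem eeφ_flip0 (x : ZMod 0) : eeφ 0 (x + 1) ≠ eeφ 0 x := by
  unfold eeφ
  have h1 : (x + 1).val = Int.natAbs ((show ℤ from x) + 1) := rfl
  have h2 : x.val = Int.natAbs (show ℤ from x) := rfl
  rw [h1, h2]
  split_ifs <;> first | decide | (exfalso; omega)

private theorem eeφ_flip {n : ℕ} (hn : n ≠ 1) (x : ZMod n) :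
    eeφ n (x + 1) ≠ eeφ n x := by
  match n, hn with
  | 0, _ => exact eeφ_flip0 x
  | (m + 2), _ =>
    unfold eeφ
    haveI : NeZero (m + 2) := ⟨by omega⟩
    haveI : Fact (1 < m + 2) := ⟨by omega⟩
    have hlt : x.val < m + 2 := ZMod.val_lt x
    have hadd : (x + 1).val = (x.val + 1) % (m + 2) := by
      rw [ZMod.val_add, ZMod.val_one]
    by_cases hx : x.val = m + 1
    · have h0 : (x + 1).val = 0 := by rw [hadd, hx]; simp [Nat.mod_self]
      rw [h0, hx]
      split_ifs <;> first | decide | (exfalso; omega)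
    · have h0 : (x + 1).val = x.val + 1 := by
        rw [hadd, Nat.mod_eq_of_lt (by omega)]
      rw [h0]
      split_ifs <;> first | decide | (exfalso; omega)

section EE

variable {Γ : Type*} [Group Γ]

/-- Same orbit under left multiplication by powers of γ. -/
private def eeSetoid (γ : Γ) : Setoid Γ where
  r a b := ∃ k : ℤ, b = γ ^ k * a
  iseqv := by
    refine ⟨fun a => ⟨0, by simp⟩, ?_, ?_⟩
    · rintro a b ⟨k, rfl⟩
      exact ⟨-k, by group⟩
    · rintro a b c ⟨k, rfl⟩ ⟨l, rfl⟩
      exact ⟨l + k, by rw [zpow_add, mul_assoc]⟩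

private noncomputable def eeRep (γ : Γ) (t : Γ) : Γ :=
  (Quotient.mk (eeSetoid γ) t).out

private theorem eeRep_spec (γ : Γ) (t : Γ) : ∃ k : ℤ, t = γ ^ k * eeRep γ t :=
  Quotient.mk_out (s := eeSetoid γ) t

private theorem eeRep_mul (γ : Γ) (t : Γ) : eeRep γ (γ * t) = eeRep γ t := by
  unfold eeRep
  congr 1
  exact Quotient.sound ⟨-1, by group⟩

private noncomputable def eeK (γ : Γ) (t : Γ) : ℤ :=
  (eeRep_spec γ t).choose

private noncomputable def eeκ (γ : Γ) (t : Γ) : ZMod (orderOf γ) :=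
  ((eeK γ t : ℤ) : ZMod (orderOf γ))

private theorem eeκ_mul (γ : Γ) (t : Γ) : eeκ γ (γ * t) = eeκ γ t + 1 := by
  have h1 : t = γ ^ eeK γ t * eeRep γ t := (eeRep_spec γ t).choose_spec
  have h2 : γ * t = γ ^ eeK γ (γ * t) * eeRep γ (γ * t) :=
    (eeRep_spec γ (γ * t)).choose_spec
  rw [eeRep_mul] at h2
  have h3 : γ ^ eeK γ (γ * t) = γ ^ (1 + eeK γ t) := by
    have heq : γ ^ eeK γ (γ * t) * eeRep γ t = γ ^ (1 + eeK γ t) * eeRep γ t := by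
      rw [← h2, zpow_add, zpow_one, mul_assoc, ← h1]
    exact mul_right_cancel heq
  have h4 : (orderOf γ : ℤ) ∣ eeK γ (γ * t) - (1 + eeK γ t) :=
    orderOf_dvd_sub_iff_zpow_eq_zpow.mpr h3
  have h5 : ((eeK γ (γ * t) - (1 + eeK γ t) : ℤ) : ZMod (orderOf γ)) = 0 :=
    (ZMod.intCast_zmod_eq_zero_iff_dvd _ _).mpr h4
  push_cast at h5
  have h6 := sub_eq_zero.mp h5
  unfold eeκ
  rw [h6, add_comm]

private noncomputable def eeCol (γ : Γ) (t : Γ) : Fin 3 :=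
  eeφ (orderOf γ) (eeκ γ t)

private theorem eeCol_flip {γ : Γ} (hγ : γ ≠ 1) (t : Γ) :
    eeCol γ (γ * t) ≠ eeCol γ t := by
  unfold eeCol
  rw [eeκ_mul]
  exact eeφ_flip (fun h => hγ (orderOf_eq_one_iff.mp h)) _

end EE

/-- For every v ∈ Γ, the element 1_{v} ⊗ 1 lies in the closure (uniform
convergence on sets K × Γ, K finite) of the span of the functions
(s,t) ↦ f(st) g(t) with f, g bounded. -/
theorem ellis_ellwood_delta {Γ : Type*} [Group Γ] [DecidableEq Γ] (v : Γ)
    (ε : ℝ) (hε : 0 < ε) (K : Finset Γ) :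
    ∃ h ∈ Submodule.span ℂ {h : Γ × Γ → ℂ | ∃ f g : Γ → ℂ,
        (∃ C : ℝ, ∀ x, ‖f x‖ ≤ C) ∧ (∃ C : ℝ, ∀ x, ‖g x‖ ≤ C) ∧
        h = fun p => f (p.1 * p.2) * g p.2},
      ∀ s ∈ K, ∀ t : Γ,
        ‖h (s, t) - (if s = v then 1 else 0)‖ ≤ ε := by
  classical
  set C : Γ → (K → Fin 3) := fun t s => eeCol (v⁻¹ * (s : Γ)) t with hC
  refine ⟨∑ p : K → Fin 3, fun q : Γ × Γ =>
      (if C (v⁻¹ * (q.1 * q.2)) = p then (1:ℂ) else 0) *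
      (if C q.2 = p then (1:ℂ) else 0), ?_, ?_⟩
  · apply Submodule.sum_mem
    intro p _
    apply Submodule.subset_span
    refine ⟨fun u => if C (v⁻¹ * u) = p then 1 else 0,
      fun u => if C u = p then 1 else 0, ⟨1, fun x => ?_⟩, ⟨1, fun x => ?_⟩, rfl⟩
    · show ‖if C (v⁻¹ * x) = p then (1:ℂ) else 0‖ ≤ 1
      split_ifs <;> simp
    · show ‖if C x = p then (1:ℂ) else 0‖ ≤ 1
      split_ifs <;> simp
  · intro s hs t
    have hsum : (∑ p : K → Fin 3, fun q : Γ × Γ =>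
        (if C (v⁻¹ * (q.1 * q.2)) = p then (1:ℂ) else 0) *
        (if C q.2 = p then (1:ℂ) else 0)) (s, t)
        = if C (v⁻¹ * (s * t)) = C t then (1:ℂ) else 0 := by
      rw [Finset.sum_apply]
      simp only [ite_mul, one_mul, zero_mul]
      rw [Finset.sum_ite_eq Finset.univ (C (v⁻¹ * (s * t)))
        (fun p => if C t = p then (1:ℂ) else 0)]
      simp only [Finset.mem_univ, if_true]
      by_cases h : C (v⁻¹ * (s * t)) = C t
      · rw [if_pos h.symm, if_pos h]
      · rw [if_neg (fun hh => h hh.symm), if_neg h]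
    rw [hsum]
    by_cases hsv : s = v
    · have h1 : C (v⁻¹ * (s * t)) = C t := by rw [hsv, inv_mul_cancel_left]
      rw [if_pos h1, if_pos hsv]
      simpa using hε.le
    · have hne : C (v⁻¹ * (s * t)) ≠ C t := by
        have hγ : v⁻¹ * s ≠ 1 := by
          intro h
          exact hsv (by rwa [inv_mul_eq_one, eq_comm] at h)
        intro h
        have h2 := congrFun h ⟨s, hs⟩
        rw [hC] at h2
        simp only at h2
        rw [show v⁻¹ * (s * t) = (v⁻¹ * s) * t by group] at h2
        exact eeCol_flip hγ t h2
      rw [if_neg hne, if_neg hsv]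
      simpa using hε.le
end

section
/- Let Γ be a discrete group. The linear span of the functions (s,t) ↦ f(st)g(t), with f, g ∈ ℓ∞(Γ), is dense in ℓ∞(Γ × Γ) in the topology of uniform convergence on sets of the form K × Γ with K ⊆ Γ finite. -/
open scoped Classical

noncomputable def katColor {Γ : Type*} [Group Γ] (U : Finset Γ) : Γ → ℕ :=
  (IsWellFounded.wf (r := WellOrderingRel (α := Γ))).fix fun t ih =>
    sInf {n : ℕ | n ∉ ((U.filter fun u => WellOrderingRel (u * t) t).attach.image
      fun u => ih (u.1 * t) (by
        have h2 := u.2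
        simp only [Finset.mem_filter] at h2
        exact h2.2))}

lemma katColor_eq {Γ : Type*} [Group Γ] (U : Finset Γ) (t : Γ) :
    katColor U t = sInf {n : ℕ |
      n ∉ ((U.filter fun u => WellOrderingRel (u * t) t).image fun u => katColor U (u * t))} := by
  unfold katColor
  rw [WellFounded.fix_eq]
  congr 1
  ext n
  simp only [Set.mem_setOf_eq, Finset.mem_image, Finset.mem_attach, true_and,
    Subtype.exists, exists_prop]

lemma katColor_spec {Γ : Type*} [Group Γ] (U : Finset Γ) (t : Γ) :
    katColor U t ∉ ((U.filter fun u => WellOrderingRel (u * t) t).image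
      fun u => katColor U (u * t)) ∧ katColor U t ≤ U.card := by
  classical
  set F := (U.filter fun u => WellOrderingRel (u * t) t).image fun u => katColor U (u * t) with hFdef
  have hcard : F.card ≤ U.card := le_trans Finset.card_image_le (Finset.card_filter_le _ _)
  have hex : ∃ n, n ≤ U.card ∧ n ∉ F := by
    by_contra h
    push_neg at h
    have hsub : Finset.range (U.card + 1) ⊆ F := by
      intro n hn
      exact h n (Nat.lt_succ_iff.mp (Finset.mem_range.mp hn))
    have := Finset.card_le_card hsub
    simp [Finset.card_range] at this
    omega
  obtain ⟨n, hn1, hn2⟩ := hex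
  have hne : {n : ℕ | n ∉ F}.Nonempty := ⟨n, hn2⟩
  constructor
  · have := Nat.sInf_mem hne
    rw [katColor_eq]
    exact this
  · rw [katColor_eq]
    exact le_trans (Nat.sInf_le hn2) hn1

lemma katColor_ne {Γ : Type*} [Group Γ] (U : Finset Γ)
    (hUsym : ∀ u ∈ U, u⁻¹ ∈ U) (hU1 : (1 : Γ) ∉ U) :
    ∀ u ∈ U, ∀ t : Γ, katColor U (u * t) ≠ katColor U t := by
  have key : ∀ u ∈ U, ∀ t : Γ, WellOrderingRel (u * t) t → katColor U (u * t) ≠ katColor U t := by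
    intro u hu t hr heq
    exact (katColor_spec U t).1 (Finset.mem_image.mpr
      ⟨u, Finset.mem_filter.mpr ⟨hu, hr⟩, heq⟩)
  intro u hu t
  rcases trichotomous_of (WellOrderingRel (α := Γ)) (u * t) t with h | h | h
  · exact key u hu t h
  · exact ((hU1 (mul_eq_right.mp h ▸ hu)).elim)
  · have := key u⁻¹ (hUsym u hu) (u * t) (by simpa [mul_assoc] using h)
    simpa [mul_assoc] using this.symm

/-- Ellwood freeness of the action of a discrete group on its Stone–Čech
compactification: the span of (s,t) ↦ f(st) g(t) is dense in ℓ∞(Γ × Γ) for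
the topology of uniform convergence on sets K × Γ with K finite. -/
theorem ellis_ellwood_density {Γ : Type*} [Group Γ]
    (F : Γ × Γ → ℂ) (hF : ∃ C : ℝ, ∀ p, ‖F p‖ ≤ C)
    (ε : ℝ) (hε : 0 < ε) (K : Finset Γ) :
    ∃ h ∈ Submodule.span ℂ {h : Γ × Γ → ℂ | ∃ f g : Γ → ℂ,
        (∃ C : ℝ, ∀ x, ‖f x‖ ≤ C) ∧ (∃ C : ℝ, ∀ x, ‖g x‖ ≤ C) ∧
        h = fun p => f (p.1 * p.2) * g p.2},
      ∀ s ∈ K, ∀ t : Γ, ‖h (s, t) - F (s, t)‖ ≤ ε := by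
  classical
  obtain ⟨C, hC⟩ := hF
  set U : Finset Γ := ((K ×ˢ K).image fun p : Γ × Γ => p.1⁻¹ * p.2).erase 1 with hU
  set c : Γ → ℕ := katColor U with hc
  set N : ℕ := U.card + 1 with hN
  have hUsym : ∀ u ∈ U, u⁻¹ ∈ U := by
    intro u hu
    rw [hU, Finset.mem_erase, Finset.mem_image] at hu ⊢
    obtain ⟨hu1, ⟨p, hp, hpu⟩⟩ := hu
    refine ⟨by simpa using hu1, ⟨(p.2, p.1), ?_, by simp [← hpu]⟩⟩
    · rw [Finset.mem_product] at hp ⊢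
      exact ⟨hp.2, hp.1⟩
  have hU1 : (1 : Γ) ∉ U := Finset.notMem_erase _ _
  have hcne := katColor_ne U hUsym hU1
  set h : Γ × Γ → ℂ := fun p => ∑ v ∈ K, ∑ i ∈ Finset.range N,
    ((fun x => if c (v⁻¹ * x) = i then (1 : ℂ) else 0) (p.1 * p.2)) *
    ((fun t => if c t = i then F (v, t) else 0) p.2) with hh
  refine ⟨h, ?_, ?_⟩
  · have : h = ∑ v ∈ K, ∑ i ∈ Finset.range N, fun p : Γ × Γ =>
        ((fun x => if c (v⁻¹ * x) = i then (1 : ℂ) else 0) (p.1 * p.2)) *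
        ((fun t => if c t = i then F (v, t) else 0) p.2) := by
      funext p
      rw [hh]
      simp [Finset.sum_apply]
    rw [this]
    refine Submodule.sum_mem _ fun v hv => Submodule.sum_mem _ fun i hi => ?_
    refine Submodule.subset_span ?_
    refine ⟨fun x => if c (v⁻¹ * x) = i then (1 : ℂ) else 0,
      fun t => if c t = i then F (v, t) else 0, ⟨1, fun x => ?_⟩, ⟨|C| , fun t => ?_⟩, rfl⟩
    · dsimp only; split <;> simp
    · dsimp only; split
      · exact le_trans (hC _) (le_abs_self C)
      · simp [abs_nonneg]
  · intro s hs t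
    have hval : h (s, t) = F (s, t) := by
      rw [hh]
      have hinner : ∀ v ∈ K, (∑ i ∈ Finset.range N,
          (if c (v⁻¹ * (s * t)) = i then (1 : ℂ) else 0) *
          (if c t = i then F (v, t) else 0)) =
          if c (v⁻¹ * (s * t)) = c t then F (v, t) else 0 := by
        intro v _
        rw [Finset.sum_eq_single_of_mem (c t)
          (Finset.mem_range.mpr (Nat.lt_succ_of_le (katColor_spec U t).2))]
        · simp
        · intro i _ hne
          simp [Ne.symm hne]
      calc (∑ v ∈ K, ∑ i ∈ Finset.range N,
            (if c (v⁻¹ * ((s, t).1 * (s, t).2)) = i then (1 : ℂ) else 0) *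
            (if c (s, t).2 = i then F (v, (s, t).2) else 0))
          = ∑ v ∈ K, if c (v⁻¹ * (s * t)) = c t then F (v, t) else 0 :=
            Finset.sum_congr rfl hinner
        _ = F (s, t) := by
            rw [Finset.sum_eq_single_of_mem s hs]
            · simp [← mul_assoc]
            · intro v hv hvs
              have hmem : v⁻¹ * s ∈ U := by
                rw [hU, Finset.mem_erase]
                refine ⟨fun hh => hvs (inv_mul_eq_one.mp hh), Finset.mem_image.mpr
                  ⟨(v, s), Finset.mem_product.mpr ⟨hv, hs⟩, rfl⟩⟩
              have := hcne (v⁻¹ * s) hmem t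
              rw [if_neg]
              rwa [← mul_assoc]
    rw [hval]
    simp [le_of_lt hε]
end

section
/- Let M be a cancellative monoid (or more generally a set with a family of fixed-point-free maps closed under the needed compositions) and s ∈ M an element such that left multiplication by s has no fixed point and is injective. Then there is a partition M = A₁ ⊔ A₂ ⊔ A₃ with sAᵢ ∩ Aᵢ = ∅ for each i. -/
/-- Katětov's lemma applied to a fixed-point-free injective left translation
in a monoid. -/
theorem katetov_monoid {M : Type*} [Monoid M] (s : M)
    (hfp : ∀ x : M, s * x ≠ x)
    (hinj : Function.Injective (fun x : M => s * x)) :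
    ∃ A : Fin 3 → Set M, (∀ x, ∃! i, x ∈ A i) ∧
      ∀ i, (fun x => s * x) '' A i ∩ A i = ∅ := by
  -- partial proper colorings as functional relations
  set P : Set (Set (M × Fin 3)) :=
    {S | (∀ x i j, (x, i) ∈ S → (x, j) ∈ S → i = j) ∧
         (∀ x i, (x, i) ∈ S → (s * x, i) ∉ S)} with hP
  obtain ⟨S, hSP, hSmax⟩ : ∃ S, Maximal (· ∈ P) S := by
    apply zorn_subset
    intro c hc hchain
    refine ⟨⋃₀ c, ⟨?_, ?_⟩, fun t ht => Set.subset_sUnion_of_mem ht⟩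
    · rintro x i j ⟨t, htc, hti⟩ ⟨u, huc, huj⟩
      rcases hchain.total htc huc with h | h
      · exact (hc huc).1 x i j (h hti) huj
      · exact (hc htc).1 x i j hti (h huj)
    · rintro x i ⟨t, htc, hti⟩ ⟨u, huc, hui⟩
      rcases hchain.total htc huc with h | h
      · exact (hc huc).2 x i (h hti) hui
      · exact (hc htc).2 x i hti (h hui)
  obtain ⟨hfun, hprop⟩ := hSP
  -- maximality gives totality
  have htot : ∀ x : M, ∃ i, (x, i) ∈ S := by
    intro x
    by_contra hx
    push_neg at hx
    -- at most two forbidden colors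
    have key : ∀ a b : Fin 3, ∃ i : Fin 3, i ≠ a ∧ i ≠ b := by decide
    obtain ⟨a, ha⟩ : ∃ a : Fin 3, ∀ j, (s * x, j) ∈ S → j = a := by
      by_cases h : ∃ j, (s * x, j) ∈ S
      · obtain ⟨j, hj⟩ := h
        exact ⟨j, fun k hk => hfun _ k j hk hj⟩
      · push_neg at h; exact ⟨0, fun j hj => absurd hj (h j)⟩
    obtain ⟨b, hb⟩ : ∃ b : Fin 3, ∀ y j, s * y = x → (y, j) ∈ S → j = b := by
      by_cases h : ∃ y j, s * y = x ∧ (y, j) ∈ S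
      · obtain ⟨y, j, hyx, hj⟩ := h
        refine ⟨j, fun z k hzx hk => ?_⟩
        have : z = y := hinj (by simp [hzx, hyx])
        exact hfun y k j (this ▸ hk) hj
      · push_neg at h; exact ⟨0, fun y j hy hj => absurd hj (h y j hy)⟩
    obtain ⟨i, hia, hib⟩ := key a b
    -- extend S by (x, i)
    have hSne : S ≠ insert (x, i) S := by
      intro h
      exact hx i (h ▸ Set.mem_insert _ _)
    apply hSne
    have hmem : insert (x, i) S ∈ P := by
      constructor
      · rintro z j k (hj | hj) (hk | hk)
        · rw [Prod.mk.injEq] at hj hk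
          exact hj.2.trans hk.2.symm
        · rw [Prod.mk.injEq] at hj
          exact absurd (hj.1 ▸ hk) (hx k)
        · rw [Prod.mk.injEq] at hk
          exact absurd (hk.1 ▸ hj) (hx j)
        · exact hfun z j k hj hk
      · rintro z j (hj | hj) (hk | hk)
        · rw [Prod.mk.injEq] at hj hk
          obtain ⟨rfl, rfl⟩ := hj
          exact hfp z hk.1
        · rw [Prod.mk.injEq] at hj
          obtain ⟨rfl, rfl⟩ := hj
          exact hia (ha j hk)
        · rw [Prod.mk.injEq] at hk
          obtain ⟨hzx, rfl⟩ := hk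
          exact hib (hb z j hzx hj)
        · exact hprop z j hj hk
    exact ((hSmax hmem (Set.subset_insert _ _)).antisymm (Set.subset_insert _ _)).symm
  refine ⟨fun i => {x | (x, i) ∈ S}, fun x => ?_, fun i => ?_⟩
  · obtain ⟨i, hi⟩ := htot x
    exact ⟨i, hi, fun j hj => hfun x j i hj hi⟩
  · ext y
    simp only [Set.mem_inter_iff, Set.mem_image, Set.mem_setOf_eq, Set.mem_empty_iff_false,
      iff_false, not_and]
    rintro ⟨z, hz, rfl⟩
    exact hprop z i hz
end
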